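/- Let D be an acyclic bipartite tournament and m > \zeta(D) a positive integer. Then C^m(D) has no edges. -/

import Mathlib

/-- `walkN D n u v` : there is a directed walk of length `n` from `u` to `v` in the digraph `D`. -/
def walkN {V : Type*} (D : V → V → Prop) : ℕ → V → V → Prop
  | 0 => fun u v => u = v
  | n+1 => fun u v => ∃ w, D u w ∧ walkN D n w v

/-- The `m`-step competition graph of the digraph `D`. -/
def cmGraph {V : Type*} (D : V → V → Prop) (m : ℕ) : SimpleGraph V where
  Adj u v := u ≠ v ∧ ∃ z, walkN D m u z ∧ walkN D m v z
  symm := ⟨by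
    intro u v h
    exact ⟨Ne.symm h.1, h.2.imp fun z hz => ⟨hz.2, hz.1⟩⟩⟩
  loopless := ⟨by intro v h; exact h.1 rfl⟩

/-- Sinks of the subdigraph of `D` induced by `S`. -/
def sinks {V : Type*} (D : V → V → Prop) (S : Set V) : Set V :=
  {v ∈ S | ∀ w ∈ S, ¬ D v w}

/-- The digraph sequence `D_0, D_1, …` (as vertex sets) associated with the sink sequence. -/
def Dseq {V : Type*} (D : V → V → Prop) : ℕ → Set V
  | 0 => Set.univ
  | n+1 => Dseq D n \ sinks D (Dseq D n)

/-- The sink sequence `W_0, W_1, …` of `D`. -/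
def Wseq {V : Type*} (D : V → V → Prop) (n : ℕ) : Set V := sinks D (Dseq D n)

/-- `k` is the sink elimination index `ζ(D)`. -/
def IsSinkElimIndex {V : Type*} (D : V → V → Prop) (k : ℕ) : Prop :=
  (Wseq D k = Dseq D k ∨ Wseq D k = ∅) ∧
  ∀ j < k, Wseq D j ≠ Dseq D j ∧ Wseq D j ≠ ∅

/-- A digraph is acyclic iff it has no directed closed walk of positive length. -/
def DigraphAcyclic {V : Type*} (D : V → V → Prop) : Prop :=
  ∀ v : V, ∀ n : ℕ, 0 < n → ¬ walkN D n v v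

/-- `D` is a bipartite tournament with bipartition `(V1, V2)`. -/
structure IsBipartiteTournament {V : Type*} (D : V → V → Prop) (V1 V2 : Set V) : Prop where
  nonempty1 : V1.Nonempty
  nonempty2 : V2.Nonempty
  union_eq : V1 ∪ V2 = Set.univ
  disj : V1 ∩ V2 = ∅
  oriented : ∀ x ∈ V1, ∀ y ∈ V2, Xor' (D x y) (D y x)
  no_intra : ∀ x y, D x y → (x ∈ V1 ∧ y ∈ V2) ∨ (x ∈ V2 ∧ y ∈ V1)

/-- The competition graph sequence of `D` is eventually equal, starting from `q`. -/
def PeriodicFrom {V : Type*} (D : V → V → Prop) (q : ℕ) : Prop :=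
  ∃ r, 0 < r ∧ ∀ i : ℕ, cmGraph D (q + i) = cmGraph D (q + r + i)

/-- `q` is the competition index of `D`. -/
def IsCindex {V : Type*} (D : V → V → Prop) (q : ℕ) : Prop :=
  0 < q ∧ PeriodicFrom D q ∧ ∀ q', 0 < q' → PeriodicFrom D q' → q ≤ q'

/-- `p` is the competition period of `D`, given that `q` is its competition index. -/
def IsCperiod {V : Type*} (D : V → V → Prop) (q p : ℕ) : Prop :=
  0 < p ∧ cmGraph D q = cmGraph D (q + p) ∧
    ∀ p', 0 < p' → cmGraph D q = cmGraph D (q + p') → p ≤ p'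

lemma walkN_trunc {V : Type*} (D : V → V → Prop) :
    ∀ n u z, walkN D (n+1) u z → ∃ z', walkN D n u z' := by
  intro n
  induction n with
  | zero => intro u z _; exact ⟨u, rfl⟩
  | succ n ih =>
    rintro u z ⟨w, hDuw, hwz⟩
    obtain ⟨z', hz'⟩ := ih w z hwz
    exact ⟨z', w, hDuw, hz'⟩

lemma walkN_mem_Dseq {V : Type*} (D : V → V → Prop) :
    ∀ n u z, walkN D n u z → u ∈ Dseq D n := by
  intro n
  induction n with
  | zero => intro u z _; trivial
  | succ n ih =>
    rintro u z ⟨w, hDuw, hwz⟩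
    have hwS : w ∈ Dseq D n := ih w z hwz
    obtain ⟨z', hz'⟩ := walkN_trunc D n u z ⟨w, hDuw, hwz⟩
    exact ⟨ih u z' hz', fun hs => hs.2 w hwS hDuw⟩

lemma no_sinkless {V : Type*} [Fintype V] (D : V → V → Prop)
    (hacyc : DigraphAcyclic D) (S : Set V) (hS : S.Nonempty)
    (h : ∀ v ∈ S, ∃ w ∈ S, D v w) : False := by
  obtain ⟨v0, hv0⟩ := hS
  choose f hf1 hf2 using h
  let F : {x // x ∈ S} → {x // x ∈ S} := fun x => ⟨f x.1 x.2, hf1 x.1 x.2⟩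
  have key : ∀ n (x : {x // x ∈ S}), walkN D n x.1 (F^[n] x).1 := by
    intro n
    induction n with
    | zero => intro x; rfl
    | succ n ih =>
      intro x
      rw [Function.iterate_succ_apply]
      exact ⟨(F x).1, hf2 x.1 x.2, ih (F x)⟩
  obtain ⟨i, j, hne, heq⟩ :=
    Finite.exists_ne_map_eq_of_infinite (fun n : ℕ => F^[n] (⟨v0, hv0⟩ : {x // x ∈ S}))
  wlog hij : i < j generalizing i j
  · exact this j i hne.symm heq.symm (by omega)
  have hiter : F^[j - i] (F^[i] (⟨v0, hv0⟩ : {x // x ∈ S})) = F^[i] ⟨v0, hv0⟩ := by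
    rw [← Function.iterate_add_apply]
    have : j - i + i = j := by omega
    rw [this]
    exact heq.symm
  have := key (j - i) (F^[i] ⟨v0, hv0⟩)
  rw [hiter] at this
  exact hacyc _ (j - i) (by omega) this

lemma Dseq_empty_of_gt {V : Type*} (D : V → V → Prop) (k : ℕ)
    (h : Dseq D (k+1) = ∅) : ∀ m, k < m → Dseq D m = ∅ := by
  intro m hm
  induction m with
  | zero => omega
  | succ n ih =>
    rcases Nat.lt_or_ge k n with h' | h'
    · have hn := ih h'
      show Dseq D n \ sinks D (Dseq D n) = ∅
      rw [hn]; simp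
    · have : n = k := by omega
      rw [this]; exact h

/-- If `D` is an acyclic bipartite tournament and `m > ζ(D)`, then `C^m(D)`
has no edges. -/
theorem cmGraph_empty_of_gt_zeta {V : Type*} [Fintype V] (D : V → V → Prop)
    (V1 V2 : Set V) (hD : IsBipartiteTournament D V1 V2)
    (hacyc : DigraphAcyclic D)
    (k : ℕ) (hk : IsSinkElimIndex D k)
    (m : ℕ) (hm : k < m) :
    cmGraph D m = ⊥ := by
  have hDk1 : Dseq D (k+1) = ∅ := by
    rcases hk.1 with h | h
    · show Dseq D k \ sinks D (Dseq D k) = ∅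
      have : sinks D (Dseq D k) = Dseq D k := h
      rw [this, Set.diff_self]
    · have hDk : Dseq D k = ∅ := by
        by_contra hne
        replace hne := Set.nonempty_iff_ne_empty.mpr hne
        refine no_sinkless D hacyc (Dseq D k) hne ?_
        intro v hv
        by_contra h'
        push_neg at h'
        have : v ∈ Wseq D k := ⟨hv, h'⟩
        rw [h] at this
        exact this
      show Dseq D k \ sinks D (Dseq D k) = ∅
      rw [hDk]; simp
  have hDm : Dseq D m = ∅ := Dseq_empty_of_gt D k hDk1 m hm
  ext u v
  simp only [cmGraph, SimpleGraph.bot_adj, iff_false]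
  rintro ⟨hne, z, h1, h2⟩
  have := walkN_mem_Dseq D m u z h1
  rw [hDm] at this
  exact this
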